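/- For every integer n ≥ 0 and every real x > 0, one has n·k_n(x) − x·k_{n+1}(x) < 0; equivalently the derivative of k_n is strictly negative at every x > 0, so k_n is strictly decreasing on (0, ∞). -/

import Mathlib

open Real Finset

/-- Modified spherical Bessel function of the second kind `k_n`, explicit closed form. -/
noncomputable def kBes (n : ℕ) (x : ℝ) : ℝ :=
  (Real.exp (-x) / x) *
    ∑ l ∈ Finset.range (n + 1),
      (Nat.factorial (n + l) : ℝ) /
        ((Nat.factorial l : ℝ) * (Nat.factorial (n - l) : ℝ) * (2 * x) ^ l)

/-- Modified spherical Bessel function of the first kind `i_n`, explicit closed form. -/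
noncomputable def iBes (n : ℕ) (x : ℝ) : ℝ :=
  (1 / (2 * x)) *
    (Real.exp x *
        ∑ l ∈ Finset.range (n + 1),
          (-1 : ℝ) ^ l * (Nat.factorial (n + l) : ℝ) /
            ((Nat.factorial l : ℝ) * (Nat.factorial (n - l) : ℝ) * (2 * x) ^ l)
      + (-1 : ℝ) ^ (n + 1) * Real.exp (-x) *
        ∑ l ∈ Finset.range (n + 1),
          (Nat.factorial (n + l) : ℝ) /
            ((Nat.factorial l : ℝ) * (Nat.factorial (n - l) : ℝ) * (2 * x) ^ l))

noncomputable def cc (n l : ℕ) : ℝ :=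
  (Nat.factorial (n + l) : ℝ) / ((Nat.factorial l : ℝ) * (Nat.factorial (n - l) : ℝ) * 2 ^ l)

lemma cc_pos (n l : ℕ) : 0 < cc n l := by
  unfold cc
  positivity

lemma cc_zero (n : ℕ) : cc n 0 = 1 := by
  unfold cc
  have : ((Nat.factorial n : ℝ)) ≠ 0 := by positivity
  simp [this]

lemma cc_top (n : ℕ) : cc (n+1) (n+1) = (2*(n:ℝ)+1) * cc n n := by
  unfold cc
  rw [show n+1+(n+1) = (2*n+1)+1 by ring, show n + n = 2*n by ring,
      show n+1-(n+1) = 0 by omega, show n - n = 0 by omega,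
      Nat.factorial_succ (2*n+1), Nat.factorial_succ (2*n), Nat.factorial_succ n]
  have h2 : (2:ℝ)^(n+1) = 2*2^n := by ring
  push_cast [h2]
  have hn : ((Nat.factorial n : ℝ)) ≠ 0 := by positivity
  have h2n : ((2:ℝ)^n) ≠ 0 := by positivity
  field_simp
  ring

lemma cc_rec (n l : ℕ) (h : l < n) :
    cc (n+1) (l+1) = cc n (l+1) + ((n:ℝ)+l+1) * cc n l := by
  obtain ⟨m, hm⟩ : ∃ m, n - l = m + 1 := ⟨n - l - 1, by omega⟩
  have hn : n = m + l + 1 := by omega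
  subst hn
  unfold cc
  rw [show m+l+1+1+(l+1) = (m+2*l+2)+1 by ring, show m+l+1+(l+1) = (m+2*l+1)+1 by ring,
      show m+l+1+l = m+2*l+1 by ring,
      show m+l+1+1-(l+1) = m+1 by omega, show m+l+1-(l+1) = m by omega,
      show m+l+1-l = m+1 by omega,
      Nat.factorial_succ (m+2*l+2), Nat.factorial_succ (m+2*l+1), Nat.factorial_succ l,
      Nat.factorial_succ m]
  have h2 : (2:ℝ)^(l+1) = 2*2^l := by ring
  push_cast [h2]
  have h1 : ((Nat.factorial l : ℝ)) ≠ 0 := by positivity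
  have h3 : ((Nat.factorial m : ℝ)) ≠ 0 := by positivity
  have h2n : ((2:ℝ)^l) ≠ 0 := by positivity
  field_simp
  ring

lemma key (n : ℕ) (g : ℕ → ℝ) :
    ∑ l ∈ range (n+2), cc (n+1) l * g l
      = ∑ l ∈ range (n+1), cc n l * g l
        + ∑ l ∈ range (n+1), ((n:ℝ)+l+1) * cc n l * g (l+1) := by
  rw [Finset.sum_range_succ' (fun l => cc (n+1) l * g l) (n+1),
      Finset.sum_range_succ' (fun l => cc n l * g l) n,
      Finset.sum_range_succ (fun l => cc (n+1) (l+1) * g (l+1)) n,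
      Finset.sum_range_succ (fun l => ((n:ℝ)+l+1) * cc n l * g (l+1)) n,
      cc_zero, cc_zero, cc_top]
  have h : ∀ l ∈ range n,
      cc (n+1) (l+1) * g (l+1)
        = cc n (l+1) * g (l+1) + ((n:ℝ)+l+1) * cc n l * g (l+1) := by
    intro l hl
    rw [cc_rec n l (mem_range.mp hl)]
    ring
  rw [Finset.sum_congr rfl h, Finset.sum_add_distrib]
  ring

lemma kBes_eq (n : ℕ) {x : ℝ} (hx : x ≠ 0) :
    kBes n x = Real.exp (-x) * ∑ l ∈ range (n+1), cc n l * x ^ (-(l:ℤ)-1) := by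
  unfold kBes
  rw [Finset.mul_sum, Finset.mul_sum]
  refine Finset.sum_congr rfl fun l _ => ?_
  unfold cc
  rw [show (-(l:ℤ)-1) = -((l+1 : ℕ):ℤ) by push_cast; ring, zpow_neg, zpow_natCast,
      mul_pow]
  have h1 : ((Nat.factorial l : ℝ)) ≠ 0 := by positivity
  have h2 : ((Nat.factorial (n-l) : ℝ)) ≠ 0 := by positivity
  have h3 : ((2:ℝ)^l) ≠ 0 := by positivity
  have h4 : x^l ≠ 0 := pow_ne_zero _ hx
  field_simp
  ring

lemma kBes_ineq (n : ℕ) {x : ℝ} (hx : 0 < x) :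
    (n : ℝ) * kBes n x - x * kBes (n + 1) x < 0 := by
  have hne := hx.ne'
  have hq : ∀ l : ℕ, x ^ (-((l+1:ℕ):ℤ)-1) = x⁻¹ * x ^ (-(l:ℤ)-1) := fun l => by
    rw [show -((l+1:ℕ):ℤ)-1 = (-1) + (-(l:ℤ)-1) by push_cast; ring, zpow_add₀ hne,
        zpow_neg_one]
  have main : (n:ℝ) * kBes n x - x * kBes (n+1) x
      = -(Real.exp (-x) * ∑ l ∈ range (n+1),
          ((x + (l:ℝ) + 1) * cc n l * x ^ (-(l:ℤ)-1))) := by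
    rw [kBes_eq n hne, kBes_eq (n+1) hne, key n (fun l => x ^ (-(l:ℤ)-1))]
    simp only [mul_add, Finset.mul_sum]
    rw [← Finset.sum_add_distrib, ← Finset.sum_sub_distrib, ← Finset.sum_neg_distrib]
    refine Finset.sum_congr rfl fun l hl => ?_
    rw [hq l]
    field_simp
    ring
  rw [main]
  have hpos : 0 < Real.exp (-x) * ∑ l ∈ range (n+1),
      ((x + (l:ℝ) + 1) * cc n l * x ^ (-(l:ℤ)-1)) := by
    refine mul_pos (Real.exp_pos _) (Finset.sum_pos (fun l _ => ?_) ⟨0, Finset.mem_range.mpr (Nat.succ_pos n)⟩)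
    have := cc_pos n l
    have hz : (0:ℝ) < x ^ (-(l:ℤ)-1) := zpow_pos hx _
    positivity
  linarith

lemma kBes_hasDerivAt (n : ℕ) {x : ℝ} (hx : 0 < x) :
    HasDerivAt (kBes n) ((n : ℝ) * kBes n x / x - kBes (n + 1) x) x := by
  have hne := hx.ne'
  set F : ℝ → ℝ := fun y => Real.exp (-y) * ∑ l ∈ range (n+1), cc n l * y ^ (-(l:ℤ)-1)
    with hF
  have h1 : HasDerivAt (fun y : ℝ => Real.exp (-y)) (-Real.exp (-x)) x := by
    simpa using ((hasDerivAt_id x).neg).exp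
  have h2 : HasDerivAt (fun y : ℝ => ∑ l ∈ range (n+1), cc n l * y ^ (-(l:ℤ)-1))
      (∑ l ∈ range (n+1), cc n l * (((-(l:ℤ)-1 : ℤ) : ℝ) * x ^ (-(l:ℤ)-1-1))) x :=
    HasDerivAt.fun_sum fun l _ => (hasDerivAt_zpow (-(l:ℤ)-1) x (Or.inl hne)).const_mul _
  have hFD : HasDerivAt F
      (-Real.exp (-x) * ∑ l ∈ range (n+1), cc n l * x ^ (-(l:ℤ)-1)
        + Real.exp (-x) * ∑ l ∈ range (n+1), cc n l * (((-(l:ℤ)-1 : ℤ) : ℝ) * x ^ (-(l:ℤ)-1-1))) x := by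
    simpa [hF] using h1.fun_mul h2
  have heq : kBes n =ᶠ[nhds x] F := by
    filter_upwards [eventually_ne_nhds hne] with y hy
    exact kBes_eq n hy
  have hD : HasDerivAt (kBes n) _ x := hFD.congr_of_eventuallyEq heq
  convert hD using 1
  -- algebraic identity
  have hq : ∀ l : ℕ, x ^ (-((l+1:ℕ):ℤ)-1) = x⁻¹ * x ^ (-(l:ℤ)-1) := fun l => by
    rw [show -((l+1:ℕ):ℤ)-1 = (-1) + (-(l:ℤ)-1) by push_cast; ring, zpow_add₀ hne,
        zpow_neg_one]
  have hq2 : ∀ l : ℕ, x ^ (-(l:ℤ)-1-1) = x⁻¹ * x ^ (-(l:ℤ)-1) := fun l => by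
    rw [show -(l:ℤ)-1-1 = (-1) + (-(l:ℤ)-1) by ring, zpow_add₀ hne, zpow_neg_one]
  rw [kBes_eq n hne, kBes_eq (n+1) hne, key n (fun l => x ^ (-(l:ℤ)-1))]
  simp only [mul_add, Finset.mul_sum, div_eq_mul_inv, Finset.sum_mul]
  rw [sub_add_eq_sub_sub, ← Finset.sum_sub_distrib, ← Finset.sum_sub_distrib,
      ← Finset.sum_add_distrib]
  refine Finset.sum_congr rfl fun l hl => ?_
  rw [hq l, hq2 l]
  push_cast
  field_simp
  ring

/-- For every integer `n ≥ 0` and every real `x > 0`, `n·k_n(x) − x·k_{n+1}(x) < 0`;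
equivalently the derivative of `k_n` is strictly negative at every `x > 0`, so `k_n`
is strictly decreasing on `(0, ∞)`. -/
theorem kBes_decreasing (n : ℕ) :
    (∀ x : ℝ, 0 < x →
      (n : ℝ) * kBes n x - x * kBes (n + 1) x < 0 ∧ deriv (kBes n) x < 0) ∧
    StrictAntiOn (kBes n) (Set.Ioi 0) := by
  have hderiv : ∀ x : ℝ, 0 < x → deriv (kBes n) x < 0 := by
    intro x hx
    rw [(kBes_hasDerivAt n hx).deriv]
    have h := kBes_ineq n hx
    rw [show (n : ℝ) * kBes n x / x - kBes (n + 1) x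
        = ((n : ℝ) * kBes n x - x * kBes (n + 1) x) / x by field_simp]
    exact div_neg_of_neg_of_pos h hx
  refine ⟨fun x hx => ⟨kBes_ineq n hx, hderiv x hx⟩, ?_⟩
  refine StrictAntiOn.mono ?_ (le_refl (Set.Ioi 0))
  refine strictAntiOn_of_deriv_neg (convex_Ioi 0) ?_ ?_
  · intro x hx
    exact (kBes_hasDerivAt n hx).continuousAt.continuousWithinAt
  · intro x hx
    rw [interior_Ioi] at hx
    exact hderiv x hx
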